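/- arXiv:1805.05273 — 2 statements merged into one kernel-verified Lean document; each statement's English description precedes it below -/
import Mathlib

section
/- For all integers m ≥ 3 and n ≥ 4, the Neighbourhood Zagreb index of the C_4-nanotube TUC_4(m,n) = P_n × C_m equals 256mn − 374m. -/
open Finset
open scoped Classical

/-- Sum of degrees of the neighbours of a vertex: `δ_G(v) = ∑_{u ∈ N_G(v)} deg_G(u)`. -/
noncomputable def neighborDegSum {V : Type*} [Fintype V] (G : SimpleGraph V) (v : V) : ℕ :=
  ∑ u ∈ G.neighborFinset v, G.degree u

/-- The Neighbourhood Zagreb index `M_N(G) = ∑_{v ∈ V(G)} δ_G(v)²`. -/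
noncomputable def neighborhoodZagreb {V : Type*} [Fintype V] (G : SimpleGraph V) : ℕ :=
  ∑ v, (neighborDegSum G v) ^ 2

/-- Degree with the ambient (classical) instances, to avoid instance mismatches. -/
noncomputable def cdeg {V : Type*} [Fintype V] (G : SimpleGraph V) (v : V) : ℕ :=
  G.degree v

lemma cdeg_eq {V : Type*} [Fintype V] (G : SimpleGraph V) (v : V)
    [inst : Fintype (G.neighborSet v)] : cdeg G v = @SimpleGraph.degree V G v inst := by
  unfold cdeg SimpleGraph.degree
  congr 1
  ext u
  simp only [SimpleGraph.mem_neighborFinset]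

lemma neighborDegSum_boxProd {α β : Type*} [Fintype α] [Fintype β]
    (G : SimpleGraph α) (H : SimpleGraph β) (x : α × β) :
    neighborDegSum (G □ H) x =
      neighborDegSum G x.1 + neighborDegSum H x.2 + 2 * (cdeg G x.1 * cdeg H x.2) := by
  simp only [cdeg]
  rw [neighborDegSum, SimpleGraph.neighborFinset_boxProd, Finset.sum_disjUnion]
  rw [Finset.sum_product, Finset.sum_product]
  simp only [Finset.sum_singleton, SimpleGraph.degree_boxProd, Finset.sum_add_distrib,
    Finset.sum_const, smul_eq_mul, SimpleGraph.card_neighborFinset_eq_degree]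
  simp only [← cdeg_eq, Finset.sum_const, smul_eq_mul, SimpleGraph.card_neighborFinset_eq_degree]
  rw [neighborDegSum, neighborDegSum]
  simp only [← cdeg_eq]
  ring

lemma pg_nf_zero {n : ℕ} (hn : 2 ≤ n) (i : Fin n) (hi : i.val = 0) :
    (SimpleGraph.pathGraph n).neighborFinset i = {⟨1, by omega⟩} := by
  ext u
  simp only [SimpleGraph.mem_neighborFinset, SimpleGraph.pathGraph_adj, Finset.mem_singleton,
    Fin.ext_iff]
  omega

lemma pg_nf_last {n : ℕ} (hn : 2 ≤ n) (i : Fin n) (hi : i.val = n - 1) :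
    (SimpleGraph.pathGraph n).neighborFinset i = {⟨n - 2, by omega⟩} := by
  ext u
  have hu := u.isLt
  simp only [SimpleGraph.mem_neighborFinset, SimpleGraph.pathGraph_adj, Finset.mem_singleton,
    Fin.ext_iff]
  omega

lemma pg_nf_mid {n : ℕ} (i : Fin n) (h0 : i.val ≠ 0) (h1 : i.val ≠ n - 1) :
    (SimpleGraph.pathGraph n).neighborFinset i =
      {⟨i.val - 1, by omega⟩, ⟨i.val + 1, by have := i.isLt; omega⟩} := by
  ext u
  have hu := u.isLt
  have hi := i.isLt
  simp only [SimpleGraph.mem_neighborFinset, SimpleGraph.pathGraph_adj, Finset.mem_insert,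
    Finset.mem_singleton, Fin.ext_iff]
  omega

lemma path_deg {n : ℕ} (hn : 2 ≤ n) (i : Fin n) :
    (SimpleGraph.pathGraph n).degree i = if i.val = 0 ∨ i.val = n - 1 then 1 else 2 := by
  rw [SimpleGraph.degree]
  split_ifs with h
  · rcases h with h | h
    · rw [pg_nf_zero hn i h]; simp
    · rw [pg_nf_last hn i h]; simp
  · push_neg at h
    rw [pg_nf_mid i h.1 h.2]
    rw [Finset.card_pair (by simp [Fin.ext_iff])]

lemma path_cdeg {n : ℕ} (hn : 2 ≤ n) (i : Fin n) :
    cdeg (SimpleGraph.pathGraph n) i = if i.val = 0 ∨ i.val = n - 1 then 1 else 2 := by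
  rw [cdeg_eq]; exact path_deg hn i

lemma path_nds {n : ℕ} (hn : 4 ≤ n) (i : Fin n) :
    neighborDegSum (SimpleGraph.pathGraph n) i =
      if i.val = 0 ∨ i.val = n - 1 then 2
      else if i.val = 1 ∨ i.val = n - 2 then 3 else 4 := by
  have hn2 : 2 ≤ n := by omega
  have hi := i.isLt
  rw [neighborDegSum]
  by_cases h0 : i.val = 0
  · rw [pg_nf_zero hn2 i h0, Finset.sum_singleton, path_deg hn2]
    simp only [Fin.val_mk]
    split_ifs <;> (try simp only [false_or, or_false] at *) <;> omega
  · by_cases hL : i.val = n - 1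
    · rw [pg_nf_last hn2 i hL, Finset.sum_singleton, path_deg hn2]
      simp only [Fin.val_mk]
      split_ifs <;> (try simp_all) <;> omega
    · rw [pg_nf_mid i h0 hL, Finset.sum_pair (by simp [Fin.ext_iff]),
        path_deg hn2, path_deg hn2]
      simp only [Fin.val_mk]
      split_ifs <;> (try simp_all) <;> omega

lemma nds_spec {V : Type*} [Fintype V] (G : SimpleGraph V) (v : V) (s : Finset V)
    (h : ∀ u, u ∈ s ↔ G.Adj v u) :
    neighborDegSum G v = ∑ u ∈ s, cdeg G u := by
  rw [neighborDegSum]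
  apply Finset.sum_congr _ (fun _ _ => rfl)
  ext u
  rw [SimpleGraph.mem_neighborFinset, h]

lemma cycle_cdeg {m : ℕ} (hm : 3 ≤ m) (v : Fin m) :
    cdeg (SimpleGraph.cycleGraph m) v = 2 := by
  obtain ⟨k, rfl⟩ : ∃ k, m = k + 3 := ⟨m - 3, by omega⟩
  rw [cdeg_eq]
  exact SimpleGraph.cycleGraph_degree_three_le

open Fin.CommRing in
lemma cycle_nds {m : ℕ} (hm : 3 ≤ m) (v : Fin m) :
    neighborDegSum (SimpleGraph.cycleGraph m) v = 4 := by
  obtain ⟨k, rfl⟩ : ∃ k, m = k + 3 := ⟨m - 3, by omega⟩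
  have h32 : (3 : ℕ) ≤ k + 3 := by omega
  have hne : v - 1 ≠ v + 1 := by
    intro h
    have h2 : ((2 : ℕ) : Fin (k + 3)) = 0 := by push_cast; linear_combination -h
    have h3 := congrArg Fin.val h2
    rw [Fin.val_natCast, Nat.mod_eq_of_lt (by omega)] at h3
    simp at h3
  rw [nds_spec (SimpleGraph.cycleGraph (k + 3)) v {v - 1, v + 1} (by
    intro u
    rw [Finset.mem_insert, Finset.mem_singleton, SimpleGraph.cycleGraph_adj]
    constructor
    · rintro (rfl | rfl) <;> [left; right] <;> ring
    · rintro (h | h)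
      · left; linear_combination -h
      · right; linear_combination h)]
  rw [Finset.sum_pair hne, cycle_cdeg h32, cycle_cdeg h32]

theorem neighborhoodZagreb_nanotube (m n : ℕ) (hm : 3 ≤ m) (hn : 4 ≤ n) :
    (neighborhoodZagreb (SimpleGraph.pathGraph n □ SimpleGraph.cycleGraph m) : ℤ) =
      256 * m * n - 374 * m := by
  have hn2 : 2 ≤ n := by omega
  -- pointwise value of the squared neighbour degree sum
  have hpt : ∀ x : Fin n × Fin m,
      (neighborDegSum (SimpleGraph.pathGraph n □ SimpleGraph.cycleGraph m) x) ^ 2 =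
        if x.1.val = 0 ∨ x.1.val = n - 1 then 100
        else if x.1.val = 1 ∨ x.1.val = n - 2 then 225 else 256 := by
    intro x
    rw [neighborDegSum_boxProd, path_nds hn, cycle_nds hm, path_cdeg hn2, cycle_cdeg hm]
    split_ifs <;> norm_num
  have hmain : neighborhoodZagreb (SimpleGraph.pathGraph n □ SimpleGraph.cycleGraph m)
      + 374 * m = 256 * m * n := by
    rw [neighborhoodZagreb]
    rw [Finset.sum_congr rfl (fun x _ => hpt x)]
    rw [Fintype.sum_prod_type]
    dsimp only
    have hconst : ∀ (c : ℕ), (∑ _x : Fin m, c) = m * c := by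
      intro c
      simp [Finset.sum_const, Finset.card_univ, mul_comm]
    rw [Finset.sum_congr rfl (fun (x : Fin n) _ => hconst (if (x : ℕ) = 0 ∨ (x : ℕ) = n - 1 then 100
      else if (x : ℕ) = 1 ∨ (x : ℕ) = n - 2 then 225 else 256)), ← Finset.mul_sum,
      Fin.sum_univ_eq_sum_range
        (fun k => if k = 0 ∨ k = n - 1 then 100 else if k = 1 ∨ k = n - 2 then 225 else 256)]
    have key : ∀ k ∈ Finset.range n,
        (if k = 0 ∨ k = n - 1 then (100 : ℕ) else if k = 1 ∨ k = n - 2 then 225 else 256)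
          + ((if k = 0 then (156 : ℕ) else 0) + (if k = 1 then 31 else 0)
            + (if k = n - 2 then 31 else 0) + (if k = n - 1 then 156 else 0)) = 256 := by
      intro k hk
      rw [Finset.mem_range] at hk
      split_ifs <;> omega
    have hsum := Finset.sum_congr rfl key
    rw [Finset.sum_add_distrib] at hsum
    simp only [Finset.sum_add_distrib, Finset.sum_ite_eq' (Finset.range n), Finset.sum_const,
      Finset.card_range, smul_eq_mul, mul_one, Finset.mem_range] at hsum
    rw [if_pos (by omega : 0 < n), if_pos (by omega : 1 < n), if_pos (by omega : n - 2 < n),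
      if_pos (by omega : n - 1 < n)] at hsum
    have hm' := congrArg (m * ·) hsum
    simp only [Nat.mul_add] at hm'
    linarith
  have := congrArg (Nat.cast : ℕ → ℤ) hmain
  push_cast at this
  linarith
end

section
/- Let G_1, …, G_n be finite simple graphs and let G = G_1 × ⋯ × G_n be their n-fold Cartesian product, with vertex set V and edge set E. Then M_2(G) = |V|·∑_{i=1}^n M_2(G_i)/|V_i| + 3·∑_{i=1}^n M_1(G_i)·(|E|/|V_i| − |V|·|E_i|/|V_i|^2) + 4|V|·∑_{(i,j,k): i,j,k pairwise distinct} (|E_i|·|E_j|·|E_k|)/(|V_i|·|V_j|·|V_k|), where the last sum runs over all ordered triples of pairwise distinct indices. -/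
open Finset
open scoped Classical

/-- The first Zagreb index `M₁(G) = ∑_{v ∈ V(G)} deg_G(v)²`. -/
noncomputable def firstZagreb {V : Type*} [Fintype V] (G : SimpleGraph V) : ℕ :=
  ∑ v, (G.degree v) ^ 2

/-- The second Zagreb index `M₂(G) = ∑_{uv ∈ E(G)} deg_G(u)·deg_G(v)`. -/
noncomputable def secondZagreb {V : Type*} [Fintype V] (G : SimpleGraph V) : ℕ :=
  ∑ e ∈ G.edgeFinset,
    Sym2.lift ⟨fun u w => G.degree u * G.degree w, fun _ _ => mul_comm _ _⟩ e

/-- The `n`-fold Cartesian (box) product `G₁ × ⋯ × Gₙ`: vertices are tuples, and two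
tuples are adjacent iff they are adjacent in exactly one coordinate and equal elsewhere. -/
def boxProdPi {n : ℕ} {V : Fin n → Type*} (G : ∀ i, SimpleGraph (V i)) :
    SimpleGraph (∀ i, V i) where
  Adj a b := ∃ i, (G i).Adj (a i) (b i) ∧ ∀ j, j ≠ i → a j = b j
  symm := by
    refine ⟨?_⟩
    rintro a b ⟨i, hi, hj⟩
    exact ⟨i, (G i).symm.symm _ _ hi, fun j hji => (hj j hji).symm⟩
  loopless := by
    refine ⟨?_⟩
    rintro a ⟨i, hi, -⟩
    exact (G i).loopless.irrefl _ hi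

section PairSum
variable {W : Type*} [Fintype W] (G : SimpleGraph W)

lemma dart_sum_nbr (F : W → W → ℚ) :
    ∑ d : G.Dart, F d.fst d.snd = ∑ a, ∑ b ∈ G.neighborFinset a, F a b := by
  classical
  rw [← Finset.sum_fiberwise_of_maps_to (g := fun d : G.Dart => d.fst)
      (fun d _ => Finset.mem_univ d.fst) (fun d => F d.fst d.snd)]
  refine Finset.sum_congr rfl fun v _ => ?_
  have h1 : (Finset.univ.filter fun d : G.Dart => d.fst = v)
      = Finset.univ.image (G.dartOfNeighborSet v) := G.dart_fst_fiber v
  rw [h1, Finset.sum_image (fun x _ y _ h => G.dartOfNeighborSet_injective v h)]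
  calc ∑ x : ↑(G.neighborSet v),
        F (G.dartOfNeighborSet v x).toProd.1 (G.dartOfNeighborSet v x).toProd.2
      = ∑ x : ↑(G.neighborSet v), F v ↑x := rfl
    _ = ∑ b ∈ G.neighborFinset v, F v b :=
        (Finset.sum_subtype _ (fun b => by simp) _).symm

lemma dart_sum_edge (f : Sym2 W → ℚ) :
    ∑ d : G.Dart, f d.edge = 2 * ∑ e ∈ G.edgeFinset, f e := by
  classical
  rw [← Finset.sum_fiberwise_of_maps_to (t := G.edgeFinset) (g := fun d : G.Dart => d.edge)
      (fun d _ => by rw [SimpleGraph.mem_edgeFinset]; exact d.edge_mem) (fun d => f d.edge),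
    Finset.mul_sum]
  refine Finset.sum_congr rfl fun e he => ?_
  rw [Finset.sum_congr rfl (fun d hd => by rw [(Finset.mem_filter.1 hd).2]),
    Finset.sum_const, nsmul_eq_mul]
  congr 1
  have := G.dart_edge_fiber_card e (SimpleGraph.mem_edgeFinset.1 he)
  push_cast [this]
  norm_num

end PairSum

section PairSum2
variable {W : Type*} [Fintype W] (G : SimpleGraph W)

lemma pair_sum (f : W → W → ℚ) (hf : ∀ u w, f u w = f w u) :
    ∑ a, ∑ b ∈ G.neighborFinset a, f a b = 2 * ∑ e ∈ G.edgeFinset, Sym2.lift ⟨f, hf⟩ e := by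
  rw [← dart_sum_nbr, ← dart_sum_edge]
  rfl

lemma nbr_sum_swap (F : W → W → ℚ) :
    ∑ a, ∑ b ∈ G.neighborFinset a, F a b = ∑ a, ∑ b ∈ G.neighborFinset a, F b a := by
  rw [← dart_sum_nbr, ← dart_sum_nbr]
  exact Fintype.sum_bijective SimpleGraph.Dart.symm
    (SimpleGraph.Dart.symm_involutive (G := G)).bijective _ _ (fun d => rfl)

lemma two_mul_secondZagreb :
    ∑ a, ∑ b ∈ G.neighborFinset a, ((G.degree a : ℚ) * G.degree b)
      = 2 * (secondZagreb G : ℚ) := by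
  rw [pair_sum G (fun u w => (G.degree u : ℚ) * G.degree w) (fun _ _ => mul_comm _ _)]
  congr 1
  rw [secondZagreb, Nat.cast_sum]
  refine Finset.sum_congr rfl fun e _ => ?_
  induction e with
  | _ u w => push_cast [Sym2.lift_mk]; rfl

lemma sum_nbr_deg_fst :
    ∑ a, ∑ b ∈ G.neighborFinset a, (G.degree a : ℚ) = (firstZagreb G : ℚ) := by
  rw [firstZagreb, Nat.cast_sum]
  refine Finset.sum_congr rfl fun a _ => ?_
  rw [Finset.sum_const, nsmul_eq_mul, SimpleGraph.card_neighborFinset_eq_degree]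
  push_cast
  ring

lemma sum_nbr_deg_snd :
    ∑ a, ∑ b ∈ G.neighborFinset a, (G.degree b : ℚ) = (firstZagreb G : ℚ) := by
  rw [← nbr_sum_swap, sum_nbr_deg_fst]

lemma sum_nbr_deg_add :
    ∑ a, ∑ b ∈ G.neighborFinset a, ((G.degree a : ℚ) + G.degree b)
      = 2 * (firstZagreb G : ℚ) := by
  simp only [Finset.sum_add_distrib]
  rw [sum_nbr_deg_fst, sum_nbr_deg_snd]
  ring

lemma handshakeQ : ∑ a, (G.degree a : ℚ) = 2 * G.edgeFinset.card := by
  have := G.sum_degrees_eq_twice_card_edges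
  rw [show ((2:ℚ) * G.edgeFinset.card) = ((2 * G.edgeFinset.card : ℕ) : ℚ) by push_cast; ring,
    ← this, Nat.cast_sum]

end PairSum2

section Box
variable {n : ℕ} {V : Fin n → Type*} [∀ i, Fintype (V i)] (G : ∀ i, SimpleGraph (V i))

lemma boxNbr (a : ∀ i, V i) :
    (boxProdPi G).neighborFinset a
      = Finset.univ.biUnion
          (fun i => ((G i).neighborFinset (a i)).image (Function.update a i)) := by
  ext b
  simp only [SimpleGraph.mem_neighborFinset, Finset.mem_biUnion, Finset.mem_image,
    Finset.mem_univ, true_and]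
  constructor
  · rintro ⟨i, hadj, heq⟩
    refine ⟨i, b i, hadj, ?_⟩
    funext j
    by_cases hj : j = i
    · subst hj; simp
    · rw [Function.update_of_ne hj]; exact heq j hj
  · rintro ⟨i, u, hu, rfl⟩
    refine ⟨i, ?_, fun j hj => (Function.update_of_ne hj u a).symm⟩
    simpa using hu

lemma boxNbrSum (a : ∀ i, V i) (F : (∀ i, V i) → ℚ) :
    ∑ b ∈ (boxProdPi G).neighborFinset a, F b
      = ∑ i, ∑ u ∈ (G i).neighborFinset (a i), F (Function.update a i u) := by
  rw [boxNbr, Finset.sum_biUnion]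
  · refine Finset.sum_congr rfl fun i _ => ?_
    rw [Finset.sum_image]
    intro x _ y _ h
    have := congrFun h i
    simpa using this
  · intro i _ j _ hij
    simp only [Function.onFun, Finset.disjoint_left]
    rintro b hb hb'
    obtain ⟨u, hu, rfl⟩ := Finset.mem_image.1 hb
    obtain ⟨w, hw, hww⟩ := Finset.mem_image.1 hb'
    have h2 := congrFun hww i
    rw [Function.update_of_ne hij, Function.update_self] at h2
    exact ((by simpa using hu : (G i).Adj (a i) u).ne) h2

lemma boxDeg (a : ∀ i, V i) :
    (((boxProdPi G).degree a : ℚ)) = ∑ i, ((G i).degree (a i) : ℚ) := by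
  have h := boxNbrSum G a (fun _ => (1:ℚ))
  simp only [Finset.sum_const, nsmul_eq_mul, mul_one,
    SimpleGraph.card_neighborFinset_eq_degree] at h
  exact h

lemma sum_eval_core (s : Finset (Fin n)) (g : ∀ j, V j → ℚ) (hg : ∀ j ∉ s, ∀ x, g j x = 1) :
    ∑ a : ∀ j, V j, ∏ j ∈ s, g j (a j)
      = (∏ j ∈ sᶜ, (Fintype.card (V j) : ℚ)) * ∏ j ∈ s, ∑ x, g j x := by
  have h1 : ∀ a : ∀ j, V j, ∏ j ∈ s, g j (a j) = ∏ j, g j (a j) := by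
    intro a
    calc ∏ j ∈ s, g j (a j)
        = (∏ j ∈ s, g j (a j)) * ∏ j ∈ sᶜ, g j (a j) := by
          rw [Finset.prod_congr (rfl : sᶜ = sᶜ)
            (fun j hj => hg j (Finset.mem_compl.1 hj) (a j)),
            Finset.prod_const_one, mul_one]
      _ = ∏ j, g j (a j) := Finset.prod_mul_prod_compl s _
  simp only [h1]
  rw [show (∑ a : ∀ j, V j, ∏ j, g j (a j))
      = ∑ a ∈ Fintype.piFinset (fun _ => (univ : Finset (V _))), ∏ j, g j (a j) by
        rw [Fintype.piFinset_univ],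
    ← Finset.prod_univ_sum]
  rw [← Finset.prod_mul_prod_compl s (fun j => ∑ x, g j x), mul_comm]
  congr 1
  refine Finset.prod_congr rfl fun j hj => ?_
  rw [Finset.sum_congr rfl (fun x _ => hg j (Finset.mem_compl.1 hj) x), Finset.sum_const,
    nsmul_eq_mul, mul_one, Finset.card_univ]

lemma sum_eval_one (i : Fin n) (g : V i → ℚ) :
    ∑ a : ∀ j, V j, g (a i)
      = (∏ j ∈ univ.erase i, (Fintype.card (V j) : ℚ)) * ∑ x, g x := by
  have key := sum_eval_core (V := V) {i} (Function.update (fun _ _ => (1:ℚ)) i g)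
    (fun j hj x => by rw [Function.update_of_ne (by simpa using hj)])
  simp only [Finset.prod_singleton, Function.update_self, Finset.compl_singleton] at key
  exact key

lemma sum_eval_two (i j : Fin n) (hji : j ≠ i) (g : V i → ℚ) (h : V j → ℚ) :
    ∑ a : ∀ k, V k, g (a i) * h (a j)
      = (∏ k ∈ (univ.erase i).erase j, (Fintype.card (V k) : ℚ))
          * ((∑ x, g x) * (∑ x, h x)) := by
  have hij : i ≠ j := hji.symm
  have hmem : i ∉ ({j} : Finset (Fin n)) := by simpa using hij
  have key := sum_eval_core (V := V) {i, j}
    (Function.update (Function.update (fun _ _ => (1:ℚ)) j h) i g)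
    (fun k hk x => by
      simp only [Finset.mem_insert, Finset.mem_singleton, not_or] at hk
      rw [Function.update_of_ne hk.1, Function.update_of_ne hk.2])
  have hc : ({i, j} : Finset (Fin n))ᶜ = (univ.erase i).erase j := by
    rw [Finset.compl_insert, Finset.compl_singleton, Finset.erase_right_comm]
  simp only [Finset.prod_pair hij, Function.update_self, Function.update_of_ne hji, hc] at key
  exact key

lemma sum_eval_three (i j k : Fin n) (hji : j ≠ i) (hki : k ≠ i) (hkj : k ≠ j)
    (f : V i → ℚ) (g : V j → ℚ) (h : V k → ℚ) :
    ∑ a : ∀ l, V l, f (a i) * (g (a j) * h (a k))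
      = (∏ l ∈ ((univ.erase i).erase j).erase k, (Fintype.card (V l) : ℚ))
          * ((∑ x, f x) * ((∑ x, g x) * (∑ x, h x))) := by
  have key := sum_eval_core (V := V) {i, j, k}
    (Function.update (Function.update (Function.update (fun _ _ => (1:ℚ)) k h) j g) i f)
    (fun l hl x => by
      simp only [Finset.mem_insert, Finset.mem_singleton, not_or] at hl
      rw [Function.update_of_ne hl.1, Function.update_of_ne hl.2.1,
        Function.update_of_ne hl.2.2])
  have hc : ({i, j, k} : Finset (Fin n))ᶜ = ((univ.erase i).erase j).erase k := by
    ext l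
    simp only [Finset.mem_compl, Finset.mem_insert, Finset.mem_singleton, Finset.mem_erase,
      Finset.mem_univ, and_true, not_or]
    tauto
  have hprod : ∀ a : ∀ l, V l,
      ∏ l ∈ ({i, j, k} : Finset (Fin n)),
        (Function.update (Function.update (Function.update (fun _ _ => (1:ℚ)) k h) j g) i f)
          l (a l)
      = f (a i) * (g (a j) * h (a k)) := by
    intro a
    rw [Finset.prod_insert (by simp [hji.symm, hki.symm]),
      Finset.prod_insert (by simpa using hkj.symm), Finset.prod_singleton]
    rw [Function.update_self, Function.update_of_ne hji, Function.update_self,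
      Function.update_of_ne hki, Function.update_of_ne hkj, Function.update_self]
  have hsum : ∏ l ∈ ({i, j, k} : Finset (Fin n)),
      ∑ x, (Function.update (Function.update (Function.update (fun _ _ => (1:ℚ)) k h) j g) i f)
        l x
      = (∑ x, f x) * ((∑ x, g x) * (∑ x, h x)) := by
    rw [Finset.prod_insert (by simp [hji.symm, hki.symm]),
      Finset.prod_insert (by simpa using hkj.symm), Finset.prod_singleton]
    rw [Function.update_self, Function.update_of_ne hji, Function.update_self,
      Function.update_of_ne hki, Function.update_of_ne hkj, Function.update_self]
  simp only [hprod, hsum, hc] at key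
  exact key

end Box


lemma sum_deg_sq {W : Type*} [Fintype W] (G : SimpleGraph W) :
    ∑ x, ((G.degree x : ℚ) * (G.degree x : ℚ)) = (firstZagreb G : ℚ) := by
  rw [firstZagreb, Nat.cast_sum]
  exact Finset.sum_congr rfl fun x _ => by push_cast; ring

lemma key_identity {n : ℕ} {V : Fin n → Type*} [∀ i, Fintype (V i)]
    (G : ∀ i, SimpleGraph (V i)) :
    2 * (secondZagreb (boxProdPi G) : ℚ)
      = ∑ i, ((∏ j ∈ univ.erase i, (Fintype.card (V j) : ℚ)) * (2 * (secondZagreb (G i) : ℚ))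
          + (∑ j ∈ univ.erase i,
              (∏ k ∈ (univ.erase i).erase j, (Fintype.card (V k) : ℚ)) *
                ((2 * (firstZagreb (G i) : ℚ)) * (2 * ((G j).edgeFinset.card : ℚ))))
          + (∑ j ∈ univ.erase i,
              ((∏ k ∈ (univ.erase i).erase j, (Fintype.card (V k) : ℚ)) *
                ((2 * ((G i).edgeFinset.card : ℚ)) * (firstZagreb (G j) : ℚ))
               + ∑ k ∈ (univ.erase i).erase j,
                  (∏ l ∈ ((univ.erase i).erase j).erase k, (Fintype.card (V l) : ℚ)) *
                    ((2 * ((G i).edgeFinset.card : ℚ)) *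
                      ((2 * ((G j).edgeFinset.card : ℚ)) *
                        (2 * ((G k).edgeFinset.card : ℚ))))))) := by
  classical
  rw [← two_mul_secondZagreb]
  have step1 : ∑ a, ∑ b ∈ (boxProdPi G).neighborFinset a,
        (((boxProdPi G).degree a : ℚ) * ((boxProdPi G).degree b))
      = ∑ i, ∑ a : ∀ j, V j, ∑ u ∈ (G i).neighborFinset (a i),
          ((((G i).degree (a i) : ℚ) + ∑ j ∈ univ.erase i, ((G j).degree (a j) : ℚ)) *
           (((G i).degree u : ℚ) + ∑ j ∈ univ.erase i, ((G j).degree (a j) : ℚ))) := by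
    rw [← Finset.sum_comm]
    refine Finset.sum_congr rfl fun a _ => ?_
    rw [boxNbrSum G a (fun b => ((boxProdPi G).degree a : ℚ) * ((boxProdPi G).degree b))]
    refine Finset.sum_congr rfl fun i _ => Finset.sum_congr rfl fun u _ => ?_
    rw [boxDeg, boxDeg]
    congr 1
    · exact (Finset.add_sum_erase _ _ (Finset.mem_univ i)).symm
    · rw [← Finset.add_sum_erase _ (fun j => ((G j).degree (Function.update a i u j) : ℚ))
        (Finset.mem_univ i), Function.update_self]
      congr 1
      refine Finset.sum_congr rfl fun j hj => ?_
      rw [Function.update_of_ne (Finset.mem_erase.1 hj).1]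
  rw [step1]
  refine Finset.sum_congr rfl fun i _ => ?_
  -- expand the inner product
  have step2 : ∀ a : ∀ j, V j,
      ∑ u ∈ (G i).neighborFinset (a i),
        ((((G i).degree (a i) : ℚ) + ∑ j ∈ univ.erase i, ((G j).degree (a j) : ℚ)) *
         (((G i).degree u : ℚ) + ∑ j ∈ univ.erase i, ((G j).degree (a j) : ℚ)))
      = (∑ u ∈ (G i).neighborFinset (a i), ((G i).degree (a i) : ℚ) * ((G i).degree u : ℚ))
        + (∑ u ∈ (G i).neighborFinset (a i), (((G i).degree (a i) : ℚ) + ((G i).degree u : ℚ)))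
            * (∑ j ∈ univ.erase i, ((G j).degree (a j) : ℚ))
        + ((G i).degree (a i) : ℚ) * (∑ j ∈ univ.erase i, ((G j).degree (a j) : ℚ))^2 := by
    intro a
    rw [Finset.sum_congr rfl (fun u _ => by
      ring : ∀ u ∈ (G i).neighborFinset (a i),
        ((((G i).degree (a i) : ℚ) + ∑ j ∈ univ.erase i, ((G j).degree (a j) : ℚ)) *
         (((G i).degree u : ℚ) + ∑ j ∈ univ.erase i, ((G j).degree (a j) : ℚ)))
        = ((G i).degree (a i) : ℚ) * ((G i).degree u : ℚ)
          + (((G i).degree (a i) : ℚ) + ((G i).degree u : ℚ)) *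
              (∑ j ∈ univ.erase i, ((G j).degree (a j) : ℚ))
          + (∑ j ∈ univ.erase i, ((G j).degree (a j) : ℚ))^2)]
    rw [Finset.sum_add_distrib, Finset.sum_add_distrib, ← Finset.sum_mul, Finset.sum_const,
      nsmul_eq_mul, SimpleGraph.card_neighborFinset_eq_degree]
  simp only [step2]
  rw [Finset.sum_add_distrib, Finset.sum_add_distrib]
  congr 1
  · congr 1
    · -- A term
      exact (sum_eval_one i (fun x => ∑ u ∈ (G i).neighborFinset x,
          ((G i).degree x : ℚ) * ((G i).degree u : ℚ))).trans
        (by rw [two_mul_secondZagreb])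
    · -- B term
      calc ∑ a : ∀ j, V j,
            (∑ u ∈ (G i).neighborFinset (a i),
              (((G i).degree (a i) : ℚ) + ((G i).degree u : ℚ))) *
              (∑ j ∈ univ.erase i, ((G j).degree (a j) : ℚ))
          = ∑ a : ∀ j, V j, ∑ j ∈ univ.erase i,
              (∑ u ∈ (G i).neighborFinset (a i),
                (((G i).degree (a i) : ℚ) + ((G i).degree u : ℚ))) *
                ((G j).degree (a j) : ℚ) :=
            Finset.sum_congr rfl fun a _ => Finset.mul_sum _ _ _
        _ = ∑ j ∈ univ.erase i, ∑ a : ∀ j, V j,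
              (∑ u ∈ (G i).neighborFinset (a i),
                (((G i).degree (a i) : ℚ) + ((G i).degree u : ℚ))) *
                ((G j).degree (a j) : ℚ) := Finset.sum_comm
        _ = ∑ j ∈ univ.erase i,
              (∏ k ∈ (univ.erase i).erase j, (Fintype.card (V k) : ℚ)) *
                ((∑ x, ∑ u ∈ (G i).neighborFinset x,
                  (((G i).degree x : ℚ) + ((G i).degree u : ℚ))) *
                 (∑ x, ((G j).degree x : ℚ))) :=
            Finset.sum_congr rfl fun j hj =>
              sum_eval_two i j (Finset.mem_erase.1 hj).1
                (fun x => ∑ u ∈ (G i).neighborFinset x,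
                  (((G i).degree x : ℚ) + ((G i).degree u : ℚ)))
                (fun x => ((G j).degree x : ℚ))
        _ = _ := Finset.sum_congr rfl fun j _ => by
              rw [sum_nbr_deg_add, handshakeQ]
  · -- C term
    calc ∑ a : ∀ j, V j, ((G i).degree (a i) : ℚ) *
          (∑ j ∈ univ.erase i, ((G j).degree (a j) : ℚ)) ^ 2
        = ∑ a : ∀ j, V j, ∑ j ∈ univ.erase i, ∑ k ∈ univ.erase i,
            ((G i).degree (a i) : ℚ) *
              (((G j).degree (a j) : ℚ) * ((G k).degree (a k) : ℚ)) := by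
          refine Finset.sum_congr rfl fun a _ => ?_
          rw [pow_two, Finset.sum_mul_sum, Finset.mul_sum]
          exact Finset.sum_congr rfl fun j _ => Finset.mul_sum _ _ _
      _ = ∑ j ∈ univ.erase i, ∑ a : ∀ j, V j, ∑ k ∈ univ.erase i,
            ((G i).degree (a i) : ℚ) *
              (((G j).degree (a j) : ℚ) * ((G k).degree (a k) : ℚ)) := Finset.sum_comm
      _ = _ := ?_
    refine Finset.sum_congr rfl fun j hj => ?_
    have hji : j ≠ i := (Finset.mem_erase.1 hj).1
    calc ∑ a : ∀ j, V j, ∑ k ∈ univ.erase i,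
          ((G i).degree (a i) : ℚ) *
            (((G j).degree (a j) : ℚ) * ((G k).degree (a k) : ℚ))
        = ∑ k ∈ univ.erase i, ∑ a : ∀ j, V j,
            ((G i).degree (a i) : ℚ) *
              (((G j).degree (a j) : ℚ) * ((G k).degree (a k) : ℚ)) := Finset.sum_comm
      _ = (∑ a : ∀ j, V j, ((G i).degree (a i) : ℚ) *
              (((G j).degree (a j) : ℚ) * ((G j).degree (a j) : ℚ)))
          + ∑ k ∈ (univ.erase i).erase j, ∑ a : ∀ j, V j,
              ((G i).degree (a i) : ℚ) *
                (((G j).degree (a j) : ℚ) * ((G k).degree (a k) : ℚ)) :=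
          (Finset.add_sum_erase _ _ hj).symm
      _ = _ := ?_
    congr 1
    · -- diagonal
      refine (sum_eval_two i j hji (fun x => ((G i).degree x : ℚ))
        (fun x => ((G j).degree x : ℚ) * ((G j).degree x : ℚ))).trans ?_
      rw [handshakeQ, sum_deg_sq]
    · -- off-diagonal
      refine Finset.sum_congr rfl fun k hk => ?_
      have hkj : k ≠ j := (Finset.mem_erase.1 hk).1
      have hki : k ≠ i := (Finset.mem_erase.1 (Finset.mem_erase.1 hk).2).1
      refine (sum_eval_three i j k hji hki hkj (fun x => ((G i).degree x : ℚ))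
        (fun x => ((G j).degree x : ℚ)) (fun x => ((G k).degree x : ℚ))).trans ?_
      rw [handshakeQ, handshakeQ, handshakeQ]

lemma erase_sum_comm {n : ℕ} (f : Fin n → Fin n → ℚ) :
    ∑ i, ∑ j ∈ univ.erase i, f i j = ∑ i, ∑ j ∈ univ.erase i, f j i := by
  have h1 : ∀ i : Fin n, ∑ j ∈ univ.erase i, f i j = ∑ j, if j ≠ i then f i j else 0 :=
    fun i => by rw [← Finset.filter_ne', Finset.sum_filter]
  have h2 : ∀ i : Fin n, ∑ j ∈ univ.erase i, f j i = ∑ j, if j ≠ i then f j i else 0 :=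
    fun i => by rw [← Finset.filter_ne', Finset.sum_filter]
  calc ∑ i, ∑ j ∈ univ.erase i, f i j
      = ∑ i, ∑ j, if j ≠ i then f i j else 0 := Finset.sum_congr rfl fun i _ => h1 i
    _ = ∑ j, ∑ i, if j ≠ i then f i j else 0 := Finset.sum_comm
    _ = ∑ i, ∑ j, if j ≠ i then f j i else 0 := by
        refine Finset.sum_congr rfl fun i _ => Finset.sum_congr rfl fun j _ => ?_
        by_cases hij : i = j
        · simp [hij]
        · simp [hij, Ne.symm hij]
    _ = ∑ i, ∑ j ∈ univ.erase i, f j i := (Finset.sum_congr rfl fun i _ => (h2 i).symm)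

theorem secondZagreb_boxProdPi {n : ℕ} {V : Fin n → Type*} [∀ i, Fintype (V i)]
    (G : ∀ i, SimpleGraph (V i)) :
    (secondZagreb (boxProdPi G) : ℚ) =
      (Fintype.card (∀ i, V i)) * ∑ i, (secondZagreb (G i) : ℚ) / (Fintype.card (V i)) +
      3 * ∑ i, (firstZagreb (G i) : ℚ) *
        (((boxProdPi G).edgeFinset.card : ℚ) / (Fintype.card (V i)) -
          (Fintype.card (∀ i, V i)) * ((G i).edgeFinset.card : ℚ) / (Fintype.card (V i)) ^ 2) +
      4 * (Fintype.card (∀ i, V i)) *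
        ∑ i, ∑ j ∈ univ.erase i, ∑ k ∈ (univ.erase i).erase j,
          ((G i).edgeFinset.card * (G j).edgeFinset.card * (G k).edgeFinset.card : ℚ) /
            ((Fintype.card (V i)) * (Fintype.card (V j)) * (Fintype.card (V k))) := by
  classical
  by_cases hne : ∀ i, (Fintype.card (V i) : ℚ) ≠ 0
  · -- main case
    -- abbreviations are written out in full
    have hPN : ∀ i : Fin n, ((Fintype.card (∀ j, V j) : ℚ))
        = (Fintype.card (V i) : ℚ) * ∏ j ∈ univ.erase i, (Fintype.card (V j) : ℚ) := by
      intro i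
      rw [Fintype.card_pi]
      push_cast
      exact (Finset.mul_prod_erase univ _ (Finset.mem_univ i)).symm
    have hNr : ∀ i : Fin n, ∀ j ∈ univ.erase i,
        (∏ k ∈ univ.erase j, (Fintype.card (V k) : ℚ))
          = (Fintype.card (V i) : ℚ) * ∏ k ∈ (univ.erase i).erase j, (Fintype.card (V k) : ℚ) := by
      intro i j hj
      have hij : i ∈ univ.erase j :=
        Finset.mem_erase.2 ⟨fun h => (Finset.mem_erase.1 hj).1 h.symm, Finset.mem_univ i⟩
      rw [← Finset.mul_prod_erase _ _ hij, Finset.erase_right_comm]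
    have hPN3 : ∀ i : Fin n, ∀ j ∈ univ.erase i, ∀ k ∈ (univ.erase i).erase j,
        ((Fintype.card (∀ j, V j) : ℚ))
          = (Fintype.card (V i) : ℚ) * ((Fintype.card (V j) : ℚ) * ((Fintype.card (V k) : ℚ) *
              ∏ l ∈ ((univ.erase i).erase j).erase k, (Fintype.card (V l) : ℚ))) := by
      intro i j hj k hk
      rw [hPN i, ← Finset.mul_prod_erase _ _ hj, ← Finset.mul_prod_erase _ _ hk]
    have hE : ((boxProdPi G).edgeFinset.card : ℚ)
        = ∑ i, (∏ j ∈ univ.erase i, (Fintype.card (V j) : ℚ)) * ((G i).edgeFinset.card : ℚ) := by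
      have h2 : 2 * ((boxProdPi G).edgeFinset.card : ℚ)
          = ∑ i, (∏ j ∈ univ.erase i, (Fintype.card (V j) : ℚ)) *
              (2 * ((G i).edgeFinset.card : ℚ)) := by
        calc 2 * ((boxProdPi G).edgeFinset.card : ℚ)
            = ∑ a, ((boxProdPi G).degree a : ℚ) := (handshakeQ _).symm
          _ = ∑ a : ∀ j, V j, ∑ i, ((G i).degree (a i) : ℚ) :=
              Finset.sum_congr rfl fun a _ => boxDeg G a
          _ = ∑ i, ∑ a : ∀ j, V j, ((G i).degree (a i) : ℚ) := Finset.sum_comm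
          _ = ∑ i, (∏ j ∈ univ.erase i, (Fintype.card (V j) : ℚ)) *
                ∑ x, ((G i).degree x : ℚ) :=
              Finset.sum_congr rfl fun i _ => sum_eval_one i (fun x => ((G i).degree x : ℚ))
          _ = _ := Finset.sum_congr rfl fun i _ => by rw [handshakeQ]
      have h3 : ∑ i, (∏ j ∈ univ.erase i, (Fintype.card (V j) : ℚ)) *
            (2 * ((G i).edgeFinset.card : ℚ))
          = 2 * ∑ i, (∏ j ∈ univ.erase i, (Fintype.card (V j) : ℚ)) *
              ((G i).edgeFinset.card : ℚ) := by
        rw [Finset.mul_sum]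
        exact Finset.sum_congr rfl fun i _ => by ring
      rw [h3] at h2
      linarith
    -- RHS transformations
    have hT1 : ((Fintype.card (∀ i, V i) : ℚ)) * ∑ i, (secondZagreb (G i) : ℚ) / (Fintype.card (V i))
        = ∑ i, (∏ j ∈ univ.erase i, (Fintype.card (V j) : ℚ)) * (secondZagreb (G i) : ℚ) := by
      rw [Finset.mul_sum]
      refine Finset.sum_congr rfl fun i _ => ?_
      rw [hPN i]
      have := hne i
      field_simp
    have hT2 : ∀ i : Fin n,
        (((boxProdPi G).edgeFinset.card : ℚ) / (Fintype.card (V i)) -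
          (Fintype.card (∀ i, V i)) * ((G i).edgeFinset.card : ℚ) / (Fintype.card (V i)) ^ 2)
        = ∑ j ∈ univ.erase i, (∏ k ∈ (univ.erase i).erase j, (Fintype.card (V k) : ℚ)) *
            ((G j).edgeFinset.card : ℚ) := by
      intro i
      have hsplit : ((boxProdPi G).edgeFinset.card : ℚ)
          = (Fintype.card (V i) : ℚ) *
              (∑ j ∈ univ.erase i, (∏ k ∈ (univ.erase i).erase j, (Fintype.card (V k) : ℚ)) *
                ((G j).edgeFinset.card : ℚ))
            + (∏ j ∈ univ.erase i, (Fintype.card (V j) : ℚ)) * ((G i).edgeFinset.card : ℚ) := by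
        rw [hE, ← Finset.add_sum_erase _ _ (Finset.mem_univ i), Finset.mul_sum, add_comm]
        congr 1
        refine Finset.sum_congr rfl fun j hj => ?_
        rw [hNr i j hj]
        ring
      rw [hsplit, hPN i]
      have := hne i
      field_simp
      ring
    have hT3 : ((Fintype.card (∀ i, V i) : ℚ)) *
          ∑ i, ∑ j ∈ univ.erase i, ∑ k ∈ (univ.erase i).erase j,
            ((G i).edgeFinset.card * (G j).edgeFinset.card * (G k).edgeFinset.card : ℚ) /
              ((Fintype.card (V i)) * (Fintype.card (V j)) * (Fintype.card (V k)))
        = ∑ i, ∑ j ∈ univ.erase i, ∑ k ∈ (univ.erase i).erase j,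
            (∏ l ∈ ((univ.erase i).erase j).erase k, (Fintype.card (V l) : ℚ)) *
              (((G i).edgeFinset.card : ℚ) * ((G j).edgeFinset.card : ℚ) *
                ((G k).edgeFinset.card : ℚ)) := by
      rw [Finset.mul_sum]
      refine Finset.sum_congr rfl fun i _ => ?_
      rw [Finset.mul_sum]
      refine Finset.sum_congr rfl fun j hj => ?_
      rw [Finset.mul_sum]
      refine Finset.sum_congr rfl fun k hk => ?_
      rw [hPN3 i j hj k hk]
      have h1 := hne i
      have h2 := hne j
      have h3 := hne k
      field_simp
    -- key identity, split
    have hkey : 2 * (secondZagreb (boxProdPi G) : ℚ)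
        = (∑ i, (∏ j ∈ univ.erase i, (Fintype.card (V j) : ℚ)) * (2 * (secondZagreb (G i) : ℚ)))
          + (∑ i, ∑ j ∈ univ.erase i,
              (∏ k ∈ (univ.erase i).erase j, (Fintype.card (V k) : ℚ)) *
                ((2 * (firstZagreb (G i) : ℚ)) * (2 * ((G j).edgeFinset.card : ℚ))))
          + ((∑ i, ∑ j ∈ univ.erase i,
              (∏ k ∈ (univ.erase i).erase j, (Fintype.card (V k) : ℚ)) *
                ((2 * ((G i).edgeFinset.card : ℚ)) * (firstZagreb (G j) : ℚ)))
             + ∑ i, ∑ j ∈ univ.erase i, ∑ k ∈ (univ.erase i).erase j,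
                  (∏ l ∈ ((univ.erase i).erase j).erase k, (Fintype.card (V l) : ℚ)) *
                    ((2 * ((G i).edgeFinset.card : ℚ)) *
                      ((2 * ((G j).edgeFinset.card : ℚ)) *
                        (2 * ((G k).edgeFinset.card : ℚ))))) := by
      rw [key_identity G]
      simp only [Finset.sum_add_distrib]
    have hA : ∑ i, (∏ j ∈ univ.erase i, (Fintype.card (V j) : ℚ)) * (2 * (secondZagreb (G i) : ℚ))
        = 2 * ∑ i, (∏ j ∈ univ.erase i, (Fintype.card (V j) : ℚ)) * (secondZagreb (G i) : ℚ) := by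
      rw [Finset.mul_sum]
      exact Finset.sum_congr rfl fun i _ => by ring
    have hB : ∑ i, ∑ j ∈ univ.erase i,
          (∏ k ∈ (univ.erase i).erase j, (Fintype.card (V k) : ℚ)) *
            ((2 * (firstZagreb (G i) : ℚ)) * (2 * ((G j).edgeFinset.card : ℚ)))
        = 4 * ∑ i, (firstZagreb (G i) : ℚ) *
            ∑ j ∈ univ.erase i, (∏ k ∈ (univ.erase i).erase j, (Fintype.card (V k) : ℚ)) *
              ((G j).edgeFinset.card : ℚ) := by
      rw [Finset.mul_sum]
      refine Finset.sum_congr rfl fun i _ => ?_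
      rw [Finset.mul_sum, Finset.mul_sum]
      exact Finset.sum_congr rfl fun j _ => by ring
    have hC1 : ∑ i, ∑ j ∈ univ.erase i,
          (∏ k ∈ (univ.erase i).erase j, (Fintype.card (V k) : ℚ)) *
            ((2 * ((G i).edgeFinset.card : ℚ)) * (firstZagreb (G j) : ℚ))
        = 2 * ∑ i, (firstZagreb (G i) : ℚ) *
            ∑ j ∈ univ.erase i, (∏ k ∈ (univ.erase i).erase j, (Fintype.card (V k) : ℚ)) *
              ((G j).edgeFinset.card : ℚ) := by
      refine (erase_sum_comm _).trans ?_
      rw [Finset.mul_sum]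
      refine Finset.sum_congr rfl fun i _ => ?_
      rw [Finset.mul_sum, Finset.mul_sum]
      refine Finset.sum_congr rfl fun j hj => ?_
      rw [Finset.erase_right_comm]
      ring
    have hC2 : ∑ i, ∑ j ∈ univ.erase i, ∑ k ∈ (univ.erase i).erase j,
          (∏ l ∈ ((univ.erase i).erase j).erase k, (Fintype.card (V l) : ℚ)) *
            ((2 * ((G i).edgeFinset.card : ℚ)) *
              ((2 * ((G j).edgeFinset.card : ℚ)) * (2 * ((G k).edgeFinset.card : ℚ))))
        = 8 * ∑ i, ∑ j ∈ univ.erase i, ∑ k ∈ (univ.erase i).erase j,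
            (∏ l ∈ ((univ.erase i).erase j).erase k, (Fintype.card (V l) : ℚ)) *
              (((G i).edgeFinset.card : ℚ) * ((G j).edgeFinset.card : ℚ) *
                ((G k).edgeFinset.card : ℚ)) := by
      rw [Finset.mul_sum]
      refine Finset.sum_congr rfl fun i _ => ?_
      rw [Finset.mul_sum]
      refine Finset.sum_congr rfl fun j _ => ?_
      rw [Finset.mul_sum]
      exact Finset.sum_congr rfl fun k _ => by ring
    have hT2' : ∑ i, (firstZagreb (G i) : ℚ) *
          (((boxProdPi G).edgeFinset.card : ℚ) / (Fintype.card (V i)) -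
            (Fintype.card (∀ i, V i)) * ((G i).edgeFinset.card : ℚ) / (Fintype.card (V i)) ^ 2)
        = ∑ i, (firstZagreb (G i) : ℚ) *
            ∑ j ∈ univ.erase i, (∏ k ∈ (univ.erase i).erase j, (Fintype.card (V k) : ℚ)) *
              ((G j).edgeFinset.card : ℚ) :=
      Finset.sum_congr rfl fun i _ => by rw [hT2 i]
    rw [hT1, hT2', mul_assoc 4, hT3]
    linarith [hkey, hA, hB, hC1, hC2]
  · -- degenerate case: some vertex type is empty
    push_neg at hne
    obtain ⟨i0, hi0⟩ := hne
    have h0 : Fintype.card (V i0) = 0 := by exact_mod_cast hi0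
    have hEm : IsEmpty (V i0) := Fintype.card_eq_zero_iff.mp h0
    have hPi : IsEmpty (∀ i, V i) := ⟨fun a => hEm.false (a i0)⟩
    have hcardP : Fintype.card (∀ i, V i) = 0 := @Fintype.card_eq_zero _ _ hPi
    have hedge : (boxProdPi G).edgeFinset.card = 0 := by
      have h2 := (boxProdPi G).sum_degrees_eq_twice_card_edges
      rw [@Finset.univ_eq_empty _ _ hPi, Finset.sum_empty] at h2
      omega
    have hz : secondZagreb (boxProdPi G) = 0 := by
      rw [secondZagreb, Finset.card_eq_zero.mp hedge, Finset.sum_empty]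
    rw [hz, hcardP, hedge]
    simp only [Nat.cast_zero, zero_mul, mul_zero, zero_div, sub_zero,
      Finset.sum_const_zero, add_zero, zero_add]
end
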